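/- The vector field in cartesian coordinates X(x,y) = −exp(−1/r²)·(y + x − (x/r)·G(x,y), y − x − (y/r)·G(x,y)) for (x,y) ≠ (0,0), X(0,0) = (0,0), where G(x,y) = exp(−(r/(r+x))²)·(sin²(y/(r+x)) − 2yr²sin²(y/(r+x))/(r+x)³ + (r/(r+x))·sin(2y/(r+x))) for r+x > 0 and G = 0 otherwise, is continuous on ℝ², and the origin is its unique zero. -/

import Mathlib

noncomputable def rad (p : ℝ × ℝ) : ℝ := Real.sqrt (p.1 ^ 2 + p.2 ^ 2)

open Classical in
noncomputable def G (p : ℝ × ℝ) : ℝ :=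
  if 0 < rad p + p.1 then
    Real.exp (-(rad p / (rad p + p.1)) ^ 2) *
      (Real.sin (p.2 / (rad p + p.1)) ^ 2 -
        2 * p.2 * rad p ^ 2 * Real.sin (p.2 / (rad p + p.1)) ^ 2 / (rad p + p.1) ^ 3 +
        (rad p / (rad p + p.1)) * Real.sin (2 * p.2 / (rad p + p.1)))
  else 0

open Classical in
noncomputable def X (p : ℝ × ℝ) : ℝ × ℝ :=
  if p = (0, 0) then (0, 0)
  else
    (-(Real.exp (-(1 / rad p ^ 2))) * (p.2 + p.1 - (p.1 / rad p) * G p),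
     -(Real.exp (-(1 / rad p ^ 2))) * (p.2 - p.1 - (p.2 / rad p) * G p))

lemma rad_nonneg (p : ℝ × ℝ) : 0 ≤ rad p := Real.sqrt_nonneg _

lemma abs_fst_le (p : ℝ × ℝ) : |p.1| ≤ rad p := by
  rw [rad, ← Real.sqrt_sq_eq_abs]
  exact Real.sqrt_le_sqrt (by nlinarith [sq_nonneg p.2])

lemma abs_snd_le (p : ℝ × ℝ) : |p.2| ≤ rad p := by
  rw [rad, ← Real.sqrt_sq_eq_abs]
  exact Real.sqrt_le_sqrt (by nlinarith [sq_nonneg p.1])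

lemma s_nonneg (p : ℝ × ℝ) : 0 ≤ rad p + p.1 := by
  have := abs_fst_le p
  have := neg_abs_le p.1
  linarith

lemma rad_eq_zero_iff (p : ℝ × ℝ) : rad p = 0 ↔ p = (0, 0) := by
  rw [rad, Real.sqrt_eq_zero (by positivity)]
  constructor
  · intro h
    have h1 : p.1 = 0 := by nlinarith [sq_nonneg p.1, sq_nonneg p.2]
    have h2 : p.2 = 0 := by nlinarith [sq_nonneg p.1, sq_nonneg p.2]
    exact Prod.ext h1 h2
  · intro h; rw [h]; norm_num

lemma rad_pos {p : ℝ × ℝ} (h : p ≠ (0, 0)) : 0 < rad p :=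
  lt_of_le_of_ne (rad_nonneg p) (fun h' => h ((rad_eq_zero_iff p).mp h'.symm))

lemma continuous_rad : Continuous rad := by
  unfold rad; fun_prop

lemma helper {t : ℝ} (ht : 1/2 ≤ t) :
    Real.exp (-(t^2)) * (1 + t + 2*t^3) ≤ 56 / t := by
  have ht0 : 0 < t := by linarith
  have h1 : 1 + t^2/2 ≤ Real.exp (t^2/2) := by
    have := Real.add_one_le_exp (t^2/2); linarith
  have h2 : Real.exp (t^2/2) * Real.exp (t^2/2) = Real.exp (t^2) := by
    rw [← Real.exp_add]; ring_nf
  have h3 : Real.exp (-(t^2)) * Real.exp (t^2) = 1 := by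
    rw [← Real.exp_add]; simp
  rw [le_div_iff₀ ht0]
  have he : 0 < Real.exp (-(t^2)) := Real.exp_pos _
  have hE : 0 < Real.exp (t^2/2) := Real.exp_pos _
  nlinarith [sq_nonneg (t^2/2 - 1), sq_nonneg t, mul_pos he hE,
    mul_le_mul_of_nonneg_left h1 (le_of_lt hE)]

lemma G_bound (p : ℝ × ℝ) (hr : 0 < rad p) :
    |G p| ≤ 56 * (rad p + p.1) / rad p := by
  by_cases hs : 0 < rad p + p.1
  · have hy := abs_snd_le p
    have hx := le_abs_self p.1
    have hx' := abs_fst_le p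
    rw [G, if_pos hs, abs_mul, Real.abs_exp]
    set r := rad p with hrdef
    set s := r + p.1 with hsdef
    have hts : s ≤ 2*r := by linarith
    set t := r / s with htdef
    have ht : 1/2 ≤ t := by rw [htdef, le_div_iff₀ hs]; linarith
    have ht0 : 0 < t := by linarith
    have m1 : Real.sin (p.2/s)^2 ≤ 1 := Real.sin_sq_le_one _
    have m2 : 0 ≤ Real.sin (p.2/s)^2 := sq_nonneg _
    have m3 : |Real.sin (2*p.2/s)| ≤ 1 := Real.abs_sin_le_one _
    have hyr : |p.2| ≤ r := hy
    have ht3 : t^3 * s^3 = r^3 := by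
      rw [htdef]
      field_simp
    have mm : |2*p.2*r^2*Real.sin (p.2/s)^2/s^3| ≤ 2*t^3 := by
      rw [abs_div, abs_of_pos (pow_pos hs 3)]
      rw [div_le_iff₀ (pow_pos hs 3)]
      have e1 : |2*p.2*r^2*Real.sin (p.2/s)^2| = 2 * |p.2| * r^2 * Real.sin (p.2/s)^2 := by
        rw [abs_mul, abs_mul, abs_mul]
        rw [abs_of_nonneg (sq_nonneg r : (0:ℝ) ≤ r^2), abs_of_nonneg m2]
        norm_num
      rw [e1]
      have q1 : 2 * |p.2| * r^2 * Real.sin (p.2/s)^2 ≤ 2 * |p.2| * r^2 := by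
        nlinarith [mul_nonneg (abs_nonneg p.2) (sq_nonneg r : (0:ℝ) ≤ r^2)]
      have q2 : 2 * |p.2| * r^2 ≤ 2 * r^3 := by
        nlinarith [sq_nonneg r]
      rw [show (2:ℝ) * t^3 * s^3 = 2*(t^3*s^3) from by ring, ht3]
      linarith
    have hA : |Real.sin (p.2/s)^2 - 2*p.2*r^2*Real.sin (p.2/s)^2/s^3 + t * Real.sin (2*p.2/s)|
        ≤ 1 + t + 2*t^3 := by
      have b1 := abs_le.mp mm
      have b3 := abs_le.mp m3
      rw [abs_le]
      constructor <;> nlinarith [mul_le_mul_of_nonneg_left b3.2 ht0.le,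
        mul_le_mul_of_nonneg_left b3.1 ht0.le]
    calc Real.exp (-t^2) * |Real.sin (p.2/s)^2 - 2*p.2*r^2*Real.sin (p.2/s)^2/s^3 + t * Real.sin (2*p.2/s)|
        ≤ Real.exp (-t^2) * (1 + t + 2*t^3) := by
          exact mul_le_mul_of_nonneg_left hA (Real.exp_pos _).le
      _ ≤ 56 / t := by
          have : -t^2 = -(t^2) := by ring
          rw [this]; exact helper ht
      _ = 56 * s / r := by
          rw [htdef]; field_simp
  · have h0 : rad p + p.1 = 0 := le_antisymm (not_lt.mp hs) (s_nonneg p)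
    rw [G, if_neg hs, h0]
    simp [hr.le]

lemma continuousAt_G {p₀ : ℝ × ℝ} (h : p₀ ≠ (0, 0)) : ContinuousAt G p₀ := by
  have hr0 : 0 < rad p₀ := rad_pos h
  have hrc : ContinuousAt rad p₀ := continuous_rad.continuousAt
  have hsnd : ContinuousAt (fun q : ℝ × ℝ => q.2) p₀ := continuous_snd.continuousAt
  have hA : ContinuousAt (fun q : ℝ × ℝ => rad q + q.1) p₀ :=
    (continuous_rad.add continuous_fst).continuousAt
  by_cases hs : 0 < rad p₀ + p₀.1
  · have hsne : rad p₀ + p₀.1 ≠ 0 := ne_of_gt hs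
    have hopen : IsOpen {q : ℝ × ℝ | 0 < rad q + q.1} :=
      isOpen_lt continuous_const (continuous_rad.add continuous_fst)
    have heq : (fun q : ℝ × ℝ => Real.exp (-(rad q / (rad q + q.1)) ^ 2) *
        (Real.sin (q.2 / (rad q + q.1)) ^ 2 -
          2 * q.2 * rad q ^ 2 * Real.sin (q.2 / (rad q + q.1)) ^ 2 / (rad q + q.1) ^ 3 +
          (rad q / (rad q + q.1)) * Real.sin (2 * q.2 / (rad q + q.1)))) =ᶠ[nhds p₀] G := by
      filter_upwards [hopen.mem_nhds hs] with q hq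
      rw [G, if_pos hq]
    have hd : ContinuousAt (fun q : ℝ × ℝ => q.2 / (rad q + q.1)) p₀ := hsnd.div hA hsne
    have ht : ContinuousAt (fun q : ℝ × ℝ => rad q / (rad q + q.1)) p₀ := hrc.div hA hsne
    have hd2 : ContinuousAt (fun q : ℝ × ℝ => 2 * q.2 / (rad q + q.1)) p₀ :=
      (continuousAt_const.mul hsnd).div hA hsne
    have c1 : ContinuousAt (fun q : ℝ × ℝ => Real.exp (-(rad q / (rad q + q.1)) ^ 2)) p₀ :=
      ((ht.pow 2).neg).rexp
    have hsin1 : ContinuousAt (fun q : ℝ × ℝ => Real.sin (q.2 / (rad q + q.1))) p₀ :=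
      Real.continuous_sin.continuousAt.comp hd
    have hsin2 : ContinuousAt (fun q : ℝ × ℝ => Real.sin (2 * q.2 / (rad q + q.1))) p₀ :=
      Real.continuous_sin.continuousAt.comp hd2
    have c2 : ContinuousAt (fun q : ℝ × ℝ => Real.sin (q.2 / (rad q + q.1)) ^ 2) p₀ :=
      hsin1.pow 2
    have c3 : ContinuousAt (fun q : ℝ × ℝ =>
        2 * q.2 * rad q ^ 2 * Real.sin (q.2 / (rad q + q.1)) ^ 2 / (rad q + q.1) ^ 3) p₀ :=
      (((continuousAt_const.mul hsnd).mul (hrc.pow 2)).mul c2).div (hA.pow 3)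
        (pow_ne_zero 3 hsne)
    have c4 : ContinuousAt (fun q : ℝ × ℝ =>
        (rad q / (rad q + q.1)) * Real.sin (2 * q.2 / (rad q + q.1))) p₀ := ht.mul hsin2
    exact ContinuousAt.congr (c1.mul ((c2.sub c3).add c4)) heq
  · have hs0 : rad p₀ + p₀.1 = 0 := le_antisymm (not_lt.mp hs) (s_nonneg p₀)
    have hG0 : G p₀ = 0 := by rw [G, if_neg hs]
    rw [ContinuousAt, hG0]
    apply squeeze_zero_norm' (a := fun q : ℝ × ℝ => 56 * (rad q + q.1) / rad q)
    · have hopen : IsOpen {q : ℝ × ℝ | 0 < rad q} := isOpen_lt continuous_const continuous_rad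
      filter_upwards [hopen.mem_nhds hr0] with q hq
      rw [Real.norm_eq_abs]
      exact G_bound q hq
    · have hgc : ContinuousAt (fun q : ℝ × ℝ => 56 * (rad q + q.1) / rad q) p₀ :=
        (continuousAt_const.mul hA).div hrc (ne_of_gt hr0)
      have hval : 56 * (rad p₀ + p₀.1) / rad p₀ = 0 := by rw [hs0]; simp
      rw [ContinuousAt, hval] at hgc
      exact hgc

lemma continuousAt_X_ne {p₀ : ℝ × ℝ} (h : p₀ ≠ (0, 0)) : ContinuousAt X p₀ := by
  have hr0 : 0 < rad p₀ := rad_pos h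
  have hrne : rad p₀ ≠ 0 := ne_of_gt hr0
  have hG := continuousAt_G h
  have hrc : ContinuousAt rad p₀ := continuous_rad.continuousAt
  have heq : (fun q : ℝ × ℝ =>
      ((-(Real.exp (-(1 / rad q ^ 2))) * (q.2 + q.1 - (q.1 / rad q) * G q),
        -(Real.exp (-(1 / rad q ^ 2))) * (q.2 - q.1 - (q.2 / rad q) * G q)) : ℝ × ℝ))
      =ᶠ[nhds p₀] X := by
    filter_upwards [isOpen_ne.mem_nhds h] with q hq
    rw [X, if_neg hq]
  have hE : ContinuousAt (fun q : ℝ × ℝ => -(Real.exp (-(1 / rad q ^ 2)))) p₀ :=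
    (((continuousAt_const.div (hrc.pow 2) (pow_ne_zero 2 hrne)).neg).rexp).neg
  have hxr : ContinuousAt (fun q : ℝ × ℝ => q.1 / rad q) p₀ :=
    continuous_fst.continuousAt.div hrc hrne
  have hyr : ContinuousAt (fun q : ℝ × ℝ => q.2 / rad q) p₀ :=
    continuous_snd.continuousAt.div hrc hrne
  exact ContinuousAt.congr
    ((hE.mul ((continuous_snd.continuousAt.add continuous_fst.continuousAt).sub
        (hxr.mul hG))).prodMk
      (hE.mul ((continuous_snd.continuousAt.sub continuous_fst.continuousAt).sub
        (hyr.mul hG)))) heq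

lemma continuousAt_X_zero : ContinuousAt X (0, 0) := by
  have hX0 : X (0, 0) = (0, 0) := by rw [X, if_pos rfl]
  rw [ContinuousAt, hX0]
  have key : ∀ q : ℝ × ℝ, ‖X q‖ ≤ rad q ^ 2 * (2 * rad q + 112) := by
    intro q
    by_cases hq : q = (0, 0)
    · have h0 : rad ((0, 0) : ℝ × ℝ) = 0 := by simp [rad]
      rw [hq, hX0, h0]
      have h00 : ((0, 0) : ℝ × ℝ) = 0 := rfl
      rw [h00, norm_zero]
      norm_num
    · have hr : 0 < rad q := rad_pos hq
      have hGb : |G q| ≤ 112 := by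
        have hb := G_bound q hr
        have hsle : rad q + q.1 ≤ 2 * rad q := by
          have := abs_fst_le q; have := le_abs_self q.1; linarith
        calc |G q| ≤ 56 * (rad q + q.1) / rad q := hb
          _ ≤ 112 := by rw [div_le_iff₀ hr]; linarith
      have hexp : Real.exp (-(1 / rad q ^ 2)) ≤ rad q ^ 2 := by
        have hr2 : 0 < rad q ^ 2 := by positivity
        have h1 : 1 / rad q ^ 2 ≤ Real.exp (1 / rad q ^ 2) := by
          linarith [Real.add_one_le_exp (1 / rad q ^ 2)]
        have h2 : Real.exp (-(1 / rad q ^ 2)) * Real.exp (1 / rad q ^ 2) = 1 := by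
          rw [← Real.exp_add]; simp
        have h5 : (1 / rad q ^ 2) * rad q ^ 2 = 1 := by field_simp
        have hd : 0 < 1 / rad q ^ 2 := by positivity
        nlinarith [Real.exp_pos (-(1 / rad q ^ 2)),
          mul_le_mul_of_nonneg_left h1 (Real.exp_pos (-(1 / rad q ^ 2))).le]
      have hxx := abs_fst_le q
      have hyy := abs_snd_le q
      have hb1 : |q.1 / rad q * G q| ≤ 112 := by
        rw [abs_mul, abs_div, abs_of_pos hr]
        have hle1 : |q.1| / rad q ≤ 1 := by rw [div_le_one hr]; exact hxx
        have h0 : 0 ≤ |q.1| / rad q := div_nonneg (abs_nonneg _) hr.le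
        nlinarith [abs_nonneg (G q)]
      have hb2 : |q.2 / rad q * G q| ≤ 112 := by
        rw [abs_mul, abs_div, abs_of_pos hr]
        have hle1 : |q.2| / rad q ≤ 1 := by rw [div_le_one hr]; exact hyy
        have h0 : 0 ≤ |q.2| / rad q := div_nonneg (abs_nonneg _) hr.le
        nlinarith [abs_nonneg (G q)]
      have hd1 : |q.2 + q.1 - q.1 / rad q * G q| ≤ 2 * rad q + 112 := by
        rw [abs_le]
        constructor <;>
          nlinarith [abs_le.mp hb1, le_abs_self q.1, neg_abs_le q.1, le_abs_self q.2,
            neg_abs_le q.2, (abs_le.mp hb1).1, (abs_le.mp hb1).2]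
      have hd2 : |q.2 - q.1 - q.2 / rad q * G q| ≤ 2 * rad q + 112 := by
        rw [abs_le]
        constructor <;>
          nlinarith [le_abs_self q.1, neg_abs_le q.1, le_abs_self q.2,
            neg_abs_le q.2, (abs_le.mp hb2).1, (abs_le.mp hb2).2]
      rw [X, if_neg hq, Prod.norm_def]
      apply max_le
      · rw [Real.norm_eq_abs, abs_mul, abs_neg, Real.abs_exp]
        calc Real.exp (-(1 / rad q ^ 2)) * |q.2 + q.1 - q.1 / rad q * G q|
            ≤ Real.exp (-(1 / rad q ^ 2)) * (2 * rad q + 112) :=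
              mul_le_mul_of_nonneg_left hd1 (Real.exp_pos _).le
          _ ≤ rad q ^ 2 * (2 * rad q + 112) :=
              mul_le_mul_of_nonneg_right hexp (by positivity)
      · rw [Real.norm_eq_abs, abs_mul, abs_neg, Real.abs_exp]
        calc Real.exp (-(1 / rad q ^ 2)) * |q.2 - q.1 - q.2 / rad q * G q|
            ≤ Real.exp (-(1 / rad q ^ 2)) * (2 * rad q + 112) :=
              mul_le_mul_of_nonneg_left hd2 (Real.exp_pos _).le
          _ ≤ rad q ^ 2 * (2 * rad q + 112) :=
              mul_le_mul_of_nonneg_right hexp (by positivity)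
  have hg : Filter.Tendsto (fun q : ℝ × ℝ => rad q ^ 2 * (2 * rad q + 112))
      (nhds (0, 0)) (nhds 0) := by
    have hc : Continuous (fun q : ℝ × ℝ => rad q ^ 2 * (2 * rad q + 112)) :=
      (continuous_rad.pow 2).mul ((continuous_const.mul continuous_rad).add continuous_const)
    have h0 : rad ((0, 0) : ℝ × ℝ) = 0 := by simp [rad]
    have hct := hc.continuousAt (x := ((0, 0) : ℝ × ℝ))
    rw [ContinuousAt, h0] at hct
    simpa using hct
  have : ((0, 0) : ℝ × ℝ) = 0 := rfl
  rw [this]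
  exact squeeze_zero_norm key hg

theorem stmt_14 : Continuous X ∧ ∀ p : ℝ × ℝ, X p = (0, 0) ↔ p = (0, 0) := by
  constructor
  · rw [continuous_iff_continuousAt]
    intro p
    by_cases hp : p = (0, 0)
    · rw [hp]; exact continuousAt_X_zero
    · exact continuousAt_X_ne hp
  · intro p
    constructor
    · intro hX
      by_contra hp
      rw [X, if_neg hp] at hX
      have he : -(Real.exp (-(1 / rad p ^ 2))) ≠ 0 := by
        simp [(Real.exp_pos _).ne']
      have h1 : p.2 + p.1 - p.1 / rad p * G p = 0 := by
        have := congrArg Prod.fst hX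
        simp only [Prod.fst] at this
        rcases mul_eq_zero.mp this with h | h
        · exact absurd h he
        · exact h
      have h2 : p.2 - p.1 - p.2 / rad p * G p = 0 := by
        have := congrArg Prod.snd hX
        simp only [Prod.snd] at this
        rcases mul_eq_zero.mp this with h | h
        · exact absurd h he
        · exact h
      have hsum : p.1 ^ 2 + p.2 ^ 2 = 0 := by
        linear_combination p.2 * h1 - p.1 * h2
      have hx0 : p.1 = 0 := by nlinarith [sq_nonneg p.1, sq_nonneg p.2]
      have hy0 : p.2 = 0 := by nlinarith [sq_nonneg p.1, sq_nonneg p.2]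
      exact hp (Prod.ext hx0 hy0)
    · intro hp; rw [hp, X, if_pos rfl]
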